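/- With G¹ = sup_{x,x'} ∑_y |μ(y|x) - μ(y|x')| and G² = ∑_{x,y} |μ(x,y) - μ(x)μ(y)|, one has G² ≤ G¹ ≤ (2/μ_*) G², where μ_* = min_x μ(x) is assumed strictly positive. -/
import Mathlib

theorem stmt_5 {X Y : Type*} [Fintype X] [Fintype Y] [Nonempty X] (μ : X × Y → ℝ)
    (hμ : ∀ z, 0 ≤ μ z) (hμs : ∑ z, μ z = 1)
    (hpos : ∀ x, 0 < ∑ y, μ (x, y)) :
    let μX : X → ℝ := fun x => ∑ y, μ (x, y)
    let μY : Y → ℝ := fun y => ∑ x, μ (x, y)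
    let G1 : ℝ := ⨆ x : X, ⨆ x' : X, ∑ y, |μ (x, y) / μX x - μ (x', y) / μX x'|
    let G2 : ℝ := ∑ x, ∑ y, |μ (x, y) - μX x * μY y|
    let μstar : ℝ := ⨅ x : X, μX x
    G2 ≤ G1 ∧ G1 ≤ (2 / μstar) * G2 := by
  intro μX μY G1 G2 μstar
  have hXpos : ∀ x, 0 < μX x := hpos
  have hXne : ∀ x, μX x ≠ 0 := fun x => (hXpos x).ne'
  have hsum1 : ∑ x, μX x = 1 := by
    show ∑ x, ∑ y, μ (x, y) = 1
    rw [← Fintype.sum_prod_type]; exact hμs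
  set f : X → X → ℝ := fun x x' => ∑ y, |μ (x, y) / μX x - μ (x', y) / μX x'| with hf
  have hG1 : G1 = ⨆ x, ⨆ x', f x x' := rfl
  have hbdd2 : ∀ x, BddAbove (Set.range (f x)) :=
    fun x => Set.Finite.bddAbove (Set.finite_range _)
  have hbdd1 : BddAbove (Set.range fun x => ⨆ x', f x x') :=
    Set.Finite.bddAbove (Set.finite_range _)
  have hfG1 : ∀ x x', f x x' ≤ G1 := by
    intro x x'
    calc f x x' ≤ ⨆ x', f x x' := le_ciSup (hbdd2 x) x'
      _ ≤ G1 := le_ciSup hbdd1 x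
  -- key: for each x, total variation to μY is ≤ G1
  have key : ∀ x, ∑ y, |μ (x, y) / μX x - μY y| ≤ G1 := by
    intro x
    have h1 : ∀ y, μ (x, y) / μX x - μY y
        = ∑ x', μX x' * (μ (x, y) / μX x - μ (x', y) / μX x') := by
      intro y
      have : ∀ x' ∈ Finset.univ, μX x' * (μ (x, y) / μX x - μ (x', y) / μX x')
          = μX x' * (μ (x, y) / μX x) - μ (x', y) := by
        intro x' _
        rw [mul_sub, mul_div_cancel₀ _ (hXne x')]
      rw [Finset.sum_congr rfl this, Finset.sum_sub_distrib, ← Finset.sum_mul, hsum1, one_mul]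
    calc ∑ y, |μ (x, y) / μX x - μY y|
        = ∑ y, |∑ x', μX x' * (μ (x, y) / μX x - μ (x', y) / μX x')| := by
          exact Finset.sum_congr rfl fun y _ => by rw [h1 y]
      _ ≤ ∑ y, ∑ x', |μX x' * (μ (x, y) / μX x - μ (x', y) / μX x')| :=
          Finset.sum_le_sum fun y _ => Finset.abs_sum_le_sum_abs _ _
      _ = ∑ x', ∑ y, μX x' * |μ (x, y) / μX x - μ (x', y) / μX x'| := by
          rw [Finset.sum_comm]
          exact Finset.sum_congr rfl fun x' _ => Finset.sum_congr rfl fun y _ => by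
            rw [abs_mul, abs_of_nonneg (hXpos x').le]
      _ = ∑ x', μX x' * f x x' := by
          exact Finset.sum_congr rfl fun x' _ => (Finset.mul_sum _ _ _).symm
      _ ≤ ∑ x', μX x' * G1 :=
          Finset.sum_le_sum fun x' _ =>
            mul_le_mul_of_nonneg_left (hfG1 x x') (hXpos x').le
      _ = G1 := by rw [← Finset.sum_mul, hsum1, one_mul]
  -- rewrite inner sums of G2
  have hG2x : ∀ x, ∑ y, |μ (x, y) - μX x * μY y|
      = μX x * ∑ y, |μ (x, y) / μX x - μY y| := by
    intro x
    rw [Finset.mul_sum]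
    refine Finset.sum_congr rfl fun y _ => ?_
    have h : μX x * (μ (x, y) / μX x - μY y) = μ (x, y) - μX x * μY y := by
      rw [mul_sub, mul_div_cancel₀ _ (hXne x)]
    rw [← h, abs_mul, abs_of_nonneg (hXpos x).le]
  have part1 : G2 ≤ G1 := by
    show (∑ x, ∑ y, |μ (x, y) - μX x * μY y|) ≤ G1
    calc ∑ x, ∑ y, |μ (x, y) - μX x * μY y|
        = ∑ x, μX x * ∑ y, |μ (x, y) / μX x - μY y| :=
          Finset.sum_congr rfl fun x _ => hG2x x
      _ ≤ ∑ x, μX x * G1 :=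
          Finset.sum_le_sum fun x _ => mul_le_mul_of_nonneg_left (key x) (hXpos x).le
      _ = G1 := by rw [← Finset.sum_mul, hsum1, one_mul]
  -- μstar
  obtain ⟨x₀, hx₀⟩ := Finite.exists_min μX
  have hμstar : μstar = μX x₀ :=
    le_antisymm (ciInf_le (Set.Finite.bddBelow (Set.finite_range _)) x₀) (le_ciInf hx₀)
  have hstarpos : 0 < μstar := hμstar ▸ hXpos x₀
  have hstarle : ∀ x, μstar ≤ μX x := fun x => hμstar ▸ hx₀ x
  have hG2nonneg : ∀ x, 0 ≤ ∑ y, |μ (x, y) - μX x * μY y| :=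
    fun x => Finset.sum_nonneg fun y _ => abs_nonneg _
  -- each TV to μY is ≤ G2 / μstar
  have key2 : ∀ x, ∑ y, |μ (x, y) / μX x - μY y| ≤ G2 / μstar := by
    intro x
    have h1 : ∑ y, |μ (x, y) - μX x * μY y| ≤ G2 :=
      Finset.single_le_sum (fun x _ => hG2nonneg x) (Finset.mem_univ x)
    have h2 : μX x * ∑ y, |μ (x, y) / μX x - μY y| ≤ G2 := (hG2x x) ▸ h1
    rw [le_div_iff₀ hstarpos]
    calc (∑ y, |μ (x, y) / μX x - μY y|) * μstar
        ≤ (∑ y, |μ (x, y) / μX x - μY y|) * μX x :=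
          mul_le_mul_of_nonneg_left (hstarle x)
            (Finset.sum_nonneg fun y _ => abs_nonneg _)
      _ = μX x * ∑ y, |μ (x, y) / μX x - μY y| := mul_comm _ _
      _ ≤ G2 := h2
  have part2 : G1 ≤ (2 / μstar) * G2 := by
    rw [hG1]
    refine ciSup_le fun x => ciSup_le fun x' => ?_
    have htri : f x x' ≤ (∑ y, |μ (x, y) / μX x - μY y|)
        + ∑ y, |μ (x', y) / μX x' - μY y| := by
      rw [← Finset.sum_add_distrib]
      refine Finset.sum_le_sum fun y _ => ?_
      calc |μ (x, y) / μX x - μ (x', y) / μX x'|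
          = |(μ (x, y) / μX x - μY y) - (μ (x', y) / μX x' - μY y)| := by ring_nf
        _ ≤ |μ (x, y) / μX x - μY y| + |μ (x', y) / μX x' - μY y| := abs_sub _ _
    calc f x x' ≤ _ := htri
      _ ≤ G2 / μstar + G2 / μstar := add_le_add (key2 x) (key2 x')
      _ = (2 / μstar) * G2 := by ring
  exact ⟨part1, part2⟩
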